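/- (Tomographic reconstruction from Pauli eigenstates, underlying the linear-inversion Choi estimator.) For every k ≥ 1 and every 2^k×2^k complex matrix ρ, ρ = (1/3^k) ∑_{y ∈ S₆^k} tr(ρ |y⟩⟨y|) · ⊗_{j=1}^{k} ( 3|y_j⟩⟨y_j| − 1₂ ), where |y⟩ = |y₁⟩⊗⋯⊗|y_k⟩. -/
import Mathlib

open scoped BigOperators

set_option maxHeartbeats 2000000

/-- The six single-qubit Pauli eigenstates `|0⟩, |1⟩, |±⟩, |±i⟩`. -/
noncomputable def s6 : Fin 6 → Fin 2 → ℂ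
  | 0 => ![1, 0]
  | 1 => ![0, 1]
  | 2 => ![1 / (Real.sqrt 2 : ℂ), 1 / (Real.sqrt 2 : ℂ)]
  | 3 => ![1 / (Real.sqrt 2 : ℂ), -(1 / (Real.sqrt 2 : ℂ))]
  | 4 => ![1 / (Real.sqrt 2 : ℂ), Complex.I / (Real.sqrt 2 : ℂ)]
  | 5 => ![1 / (Real.sqrt 2 : ℂ), -(Complex.I / (Real.sqrt 2 : ℂ))]

/-- Rank-one projector `|v⟩⟨v|` onto a single-qubit vector `v`. -/
noncomputable def proj1 (v : Fin 2 → ℂ) : Matrix (Fin 2) (Fin 2) ℂ :=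
  Matrix.vecMulVec v (star v)

/-- The `k`-qubit product state `|y⟩ = |y₁⟩ ⊗ ⋯ ⊗ |y_k⟩` of Pauli eigenstates. -/
noncomputable def qState {k : ℕ} (y : Fin k → Fin 6) : (Fin k → Fin 2) → ℂ :=
  fun x => ∏ j, s6 (y j) (x j)

/-- The tensor product `⊗_{j=1}^k (3|y_j⟩⟨y_j| − 1₂)` of dual-frame operators. -/
noncomputable def dualFrame {k : ℕ} (y : Fin k → Fin 6) :
    Matrix (Fin k → Fin 2) (Fin k → Fin 2) ℂ :=
  Matrix.of fun u v => ∏ j, ((3 : ℂ) • proj1 (s6 (y j)) - 1) (u j) (v j)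

lemma s6_key (u v a b : Fin 2) :
    ∑ c : Fin 6, s6 c v * (starRingEnd ℂ) (s6 c u) * ((3 : ℂ) • proj1 (s6 c) - 1) a b
      = 3 * (if a = u then 1 else 0) * (if b = v then 1 else 0) := by
  have h2 : ((Real.sqrt 2 : ℝ) : ℂ) * ((Real.sqrt 2 : ℝ) : ℂ) = 2 := by
    rw [← Complex.ofReal_mul]; norm_num [Real.mul_self_sqrt]
  have h0 : ((Real.sqrt 2 : ℝ) : ℂ) ≠ 0 := by simp [Real.sqrt_eq_zero']
  fin_cases u <;> fin_cases v <;> fin_cases a <;> fin_cases b <;>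
  · simp only [Fin.sum_univ_six, s6, proj1, Matrix.vecMulVec_apply, Matrix.smul_apply,
      Matrix.sub_apply, Matrix.one_apply, Pi.star_apply, RCLike.star_def,
      Matrix.cons_val_zero, Matrix.cons_val_one, Matrix.head_cons,
      Complex.conj_I, map_div₀, map_one, map_neg, Complex.conj_ofReal,
      Fin.mk_zero, Fin.mk_one, if_true, if_false]
    norm_num [div_eq_mul_inv, Complex.I_sq]
    all_goals (
      have hinv : (((Real.sqrt 2 : ℝ) : ℂ))⁻¹ ^ 2 = 2⁻¹ := by rw [sq, ← mul_inv, h2]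
      have hinv4 : (((Real.sqrt 2 : ℝ) : ℂ))⁻¹ ^ 4 = 4⁻¹ := by
        rw [show (4:ℕ) = 2*2 from rfl, pow_mul, hinv]; norm_num
      ring_nf
      try simp only [hinv, hinv4]
      norm_num)

/-- tomographic reconstruction from Pauli eigenstates: for every `k ≥ 1`
and every `2^k × 2^k` matrix `ρ`,
`ρ = (1/3^k) ∑_{y ∈ S₆^k} tr(ρ|y⟩⟨y|) ⊗_j (3|y_j⟩⟨y_j| − 1₂)`. -/
theorem pauli_eigenstates_tomographic_reconstruction (k : ℕ) (hk : 1 ≤ k)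
    (ρ : Matrix (Fin k → Fin 2) (Fin k → Fin 2) ℂ) :
    ρ = (1 / (3 : ℂ) ^ k) •
        ∑ y : Fin k → Fin 6,
          (ρ * Matrix.vecMulVec (qState y) (star (qState y))).trace • dualFrame y := by
  have h3 : ((3 : ℂ)) ^ k ≠ 0 := pow_ne_zero _ (by norm_num)
  ext a b
  simp only [Matrix.smul_apply, Matrix.sum_apply, smul_eq_mul]
  have step : ∀ y : Fin k → Fin 6,
      (ρ * Matrix.vecMulVec (qState y) (star (qState y))).trace * dualFrame y a b
        = ∑ u, ∑ v, ρ u v * ∏ j, (s6 (y j) (v j) * (starRingEnd ℂ) (s6 (y j) (u j)) *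
            ((3 : ℂ) • proj1 (s6 (y j)) - 1) (a j) (b j)) := by
    intro y
    have ht : (ρ * Matrix.vecMulVec (qState y) (star (qState y))).trace
        = ∑ u, ∑ v, ρ u v * (qState y v * (starRingEnd ℂ) (qState y u)) := by
      simp only [Matrix.trace, Matrix.diag, Matrix.mul_apply, Matrix.vecMulVec_apply,
        Pi.star_apply, RCLike.star_def]
      try ring_nf
    rw [ht, Finset.sum_mul]
    refine Finset.sum_congr rfl fun u _ => ?_
    rw [Finset.sum_mul]
    refine Finset.sum_congr rfl fun v _ => ?_
    have hq : qState y v * (starRingEnd ℂ) (qState y u) * dualFrame y a b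
        = ∏ j, (s6 (y j) (v j) * (starRingEnd ℂ) (s6 (y j) (u j)) *
            ((3 : ℂ) • proj1 (s6 (y j)) - 1) (a j) (b j)) := by
      simp only [qState, dualFrame, Matrix.of_apply, map_prod, ← Finset.prod_mul_distrib]
    rw [mul_assoc, hq]
  simp only [step]
  rw [Finset.sum_comm]
  have inner : ∀ u : Fin k → Fin 2,
      (∑ v : Fin k → Fin 2, ∑ y : Fin k → Fin 6, ρ u v *
          ∏ j, (s6 (y j) (v j) * (starRingEnd ℂ) (s6 (y j) (u j)) *
            ((3 : ℂ) • proj1 (s6 (y j)) - 1) (a j) (b j)))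
        = ∑ v, ρ u v * ((3 : ℂ) ^ k * (if a = u then 1 else 0) * (if b = v then 1 else 0)) := by
    intro u
    refine Finset.sum_congr rfl fun v _ => ?_
    rw [← Finset.mul_sum]
    congr 1
    rw [← Fintype.prod_sum fun j c => (s6 c (v j) * (starRingEnd ℂ) (s6 c (u j)) *
            ((3 : ℂ) • proj1 (s6 c) - 1) (a j) (b j))]
    have : ∀ j : Fin k, (∑ c : Fin 6, s6 c (v j) * (starRingEnd ℂ) (s6 c (u j)) *
            ((3 : ℂ) • proj1 (s6 c) - 1) (a j) (b j))
        = 3 * (if a j = u j then 1 else 0) * (if b j = v j then 1 else 0) :=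
      fun j => s6_key (u j) (v j) (a j) (b j)
    simp only [this, Finset.prod_mul_distrib, Finset.prod_const, Finset.prod_boole]
    simp [Finset.card_univ, funext_iff]
  have sum_y_comm : ∀ u : Fin k → Fin 2,
      (∑ y : Fin k → Fin 6, ∑ v : Fin k → Fin 2, ρ u v *
          ∏ j, (s6 (y j) (v j) * (starRingEnd ℂ) (s6 (y j) (u j)) *
            ((3 : ℂ) • proj1 (s6 (y j)) - 1) (a j) (b j)))
        = ∑ v, ρ u v * ((3 : ℂ) ^ k * (if a = u then 1 else 0) * (if b = v then 1 else 0)) := by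
    intro u; rw [Finset.sum_comm]; exact inner u
  simp only [sum_y_comm]
  simp only [mul_ite, mul_one, mul_zero, Finset.sum_ite_eq, Finset.sum_ite_eq',
    Finset.mem_univ, if_true]
  field_simp
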